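/- Assume σ1 = τ1, σ2 = τ2, and σ3 ≠ τ3. Then the projective curve F = 0 has a unique singular point of the form (x:0:1), namely (ξ:0:1) with ξ = (σ4−τ4)/(σ3−τ3), and Sing = {(ξ:0:1), (0:1:0), (1:0:0)} has exactly 3 elements. -/

import Mathlib

open MvPolynomial

set_option maxHeartbeats 1000000

private lemma eval_smul_homog {k : Type*} [CommRing k] {σ : Type*} [Fintype σ]
    {φ : MvPolynomial σ k} {n : ℕ} (h : φ.IsHomogeneous n) (c : k) (v : σ → k) :
    eval (c • v) φ = c ^ n * eval v φ := by
  rw [eval_eq', eval_eq', Finset.mul_sum]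
  refine Finset.sum_congr rfl fun d hd => ?_
  have hdd : ∑ i, d i = n := by
    have h1 := h (mem_support_iff.mp hd)
    rw [← h1]
    simp [Finsupp.weight, Finsupp.linearCombination, Finsupp.sum]
    refine (Finset.sum_subset (Finset.subset_univ d.support) ?_).symm
    intro i _ hi
    simp [Finsupp.notMem_support_iff.mp hi]
  calc coeff d φ * ∏ i, (c • v) i ^ d i
      = coeff d φ * ((∏ i, c ^ d i) * ∏ i, v i ^ d i) := by
        rw [← Finset.prod_mul_distrib]; simp [mul_pow]
    _ = c ^ n * (coeff d φ * ∏ i, v i ^ d i) := by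
        rw [Finset.prod_pow_eq_pow_sum, hdd]; ring

private lemma pderiv_homog {k : Type*} [CommRing k] {σ : Type*} [DecidableEq σ]
    {φ : MvPolynomial σ k} {n : ℕ} (h : φ.IsHomogeneous n) (i : σ) :
    (pderiv i φ).IsHomogeneous (n - 1) := by
  rw [φ.as_sum, map_sum]
  refine IsHomogeneous.sum _ _ _ fun d hd => ?_
  rw [pderiv_monomial]
  rcases eq_or_ne (d i) 0 with h0 | h0
  · simp [h0]; exact isHomogeneous_zero _ _ _
  · refine isHomogeneous_monomial _ ?_
    have hdn : d.degree = n := by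
      have h1 := h (mem_support_iff.mp hd)
      rw [Finsupp.degree_eq_weight_one]; exact h1
    have hdec : (d - Finsupp.single i 1) + Finsupp.single i 1 = d := by
      ext j
      rcases eq_or_ne j i with rfl | hne
      · simp [Finsupp.single_apply]; omega
      · simp [Finsupp.single_apply, hne.symm, Ne.symm hne]
    have hkey : (d - Finsupp.single i 1).degree + 1 = n := by
      have h2 := congrArg Finsupp.degree hdec
      rw [hdn] at h2
      rw [← h2]
      simp only [Finsupp.degree_eq_weight_one, map_add]
      congr 1
      rw [← Finsupp.degree_eq_weight_one, Finsupp.degree_single]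
    omega

private noncomputable def Gp {k : Type*} [Field k] (α1 α2 α3 α4 β1 β2 β3 β4 c d : k) :
    MvPolynomial (Fin 3) k :=
  X 1 ^ 4 * X 2 ^ 2
  - C 2 * ((X 0 - C α1 * X 2) * (X 0 - C α2 * X 2) * (X 0 - C α3 * X 2) * (X 0 - C α4 * X 2)
          + (X 0 - C β1 * X 2) * (X 0 - C β2 * X 2) * (X 0 - C β3 * X 2) * (X 0 - C β4 * X 2))
      * X 1 ^ 2
  + (C d * X 2 - C c * X 0) ^ 2 * X 2 ^ 4

private lemma Gp_hom {k : Type*} [Field k] (α1 α2 α3 α4 β1 β2 β3 β4 c d : k) :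
    (Gp α1 α2 α3 α4 β1 β2 β3 β4 c d).IsHomogeneous 6 := by
  have hf : ∀ a : k, ((X 0 - C a * X 2 : MvPolynomial (Fin 3) k)).IsHomogeneous 1 := fun a =>
    (isHomogeneous_X k 0).sub (isHomogeneous_C_mul_X a 2)
  have hΦ : ∀ a1 a2 a3 a4 : k,
      (((X 0 - C a1 * X 2) * (X 0 - C a2 * X 2) * (X 0 - C a3 * X 2) * (X 0 - C a4 * X 2) :
        MvPolynomial (Fin 3) k)).IsHomogeneous 4 := fun a1 a2 a3 a4 => by
    simpa using (((hf a1).mul (hf a2)).mul (hf a3)).mul (hf a4)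
  have h1 : ((X 1 ^ 4 * X 2 ^ 2 : MvPolynomial (Fin 3) k)).IsHomogeneous 6 := by
    simpa using ((isHomogeneous_X k 1).pow 4).mul ((isHomogeneous_X k 2).pow 2)
  have h2 : ((C 2 * ((X 0 - C α1 * X 2) * (X 0 - C α2 * X 2) * (X 0 - C α3 * X 2) * (X 0 - C α4 * X 2)
          + (X 0 - C β1 * X 2) * (X 0 - C β2 * X 2) * (X 0 - C β3 * X 2) * (X 0 - C β4 * X 2))
      * X 1 ^ 2 : MvPolynomial (Fin 3) k)).IsHomogeneous 6 := by
    simpa using (((isHomogeneous_C (Fin 3) (2:k)).mul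
      ((hΦ α1 α2 α3 α4).add (hΦ β1 β2 β3 β4))).mul ((isHomogeneous_X k 1).pow 2))
  have h3 : (((C d * X 2 - C c * X 0) ^ 2 * X 2 ^ 4 : MvPolynomial (Fin 3) k)).IsHomogeneous 6 := by
    have hL : ((C d * X 2 - C c * X 0 : MvPolynomial (Fin 3) k)).IsHomogeneous 1 :=
      (isHomogeneous_C_mul_X d 2).sub (isHomogeneous_C_mul_X c 0)
    simpa using (hL.pow 2).mul ((isHomogeneous_X k 2).pow 4)
  exact (h1.sub h2).add h3

section evalGp
variable {k : Type*} [Field k] (α1 α2 α3 α4 β1 β2 β3 β4 c d x y z : k)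

private lemma evalGp0 : eval ![x,y,z] (Gp α1 α2 α3 α4 β1 β2 β3 β4 c d)
    = y^4 * z^2 - 2 * (((x - α1 * z) * (x - α2 * z) * (x - α3 * z) * (x - α4 * z)) + ((x - β1 * z) * (x - β2 * z) * (x - β3 * z) * (x - β4 * z))) * y^2 + (d * z - c * x)^2 * z^4 := by
  simp [Gp]
  try ring

private lemma evalGp1 : eval ![x,y,z] (pderiv 0 (Gp α1 α2 α3 α4 β1 β2 β3 β4 c d))
    = -2 * (((x - α2 * z) * (x - α3 * z) * (x - α4 * z) + (x - α1 * z) * (x - α3 * z) * (x - α4 * z) + (x - α1 * z) * (x - α2 * z) * (x - α4 * z) + (x - α1 * z) * (x - α2 * z) * (x - α3 * z)) + ((x - β2 * z) * (x - β3 * z) * (x - β4 * z) + (x - β1 * z) * (x - β3 * z) * (x - β4 * z) + (x - β1 * z) * (x - β2 * z) * (x - β4 * z) + (x - β1 * z) * (x - β2 * z) * (x - β3 * z))) * y^2 - 2 * c * (d * z - c * x) * z^4 := by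
  simp [Gp, pderiv_mul]; ring

private lemma evalGp2 : eval ![x,y,z] (pderiv 1 (Gp α1 α2 α3 α4 β1 β2 β3 β4 c d))
    = 4 * y^3 * z^2 - 4 * (((x - α1 * z) * (x - α2 * z) * (x - α3 * z) * (x - α4 * z)) + ((x - β1 * z) * (x - β2 * z) * (x - β3 * z) * (x - β4 * z))) * y := by
  simp [Gp, pderiv_mul]; ring

private lemma evalGp3 : eval ![x,y,z] (pderiv 2 (Gp α1 α2 α3 α4 β1 β2 β3 β4 c d))
    = 2 * y^4 * z - 2 * (((-α1) * ((x - α2 * z) * (x - α3 * z) * (x - α4 * z)) + (-α2) * ((x - α1 * z) * (x - α3 * z) * (x - α4 * z)) + (-α3) * ((x - α1 * z) * (x - α2 * z) * (x - α4 * z)) + (-α4) * ((x - α1 * z) * (x - α2 * z) * (x - α3 * z))) + ((-β1) * ((x - β2 * z) * (x - β3 * z) * (x - β4 * z)) + (-β2) * ((x - β1 * z) * (x - β3 * z) * (x - β4 * z)) + (-β3) * ((x - β1 * z) * (x - β2 * z) * (x - β4 * z)) + (-β4) * ((x - β1 * z) * (x - β2 * z) * (x - β3 * z)))) * y^2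
      + 2 * d * (d * z - c * x) * z^4 + 4 * (d * z - c * x)^2 * z^3 := by
  simp [Gp, pderiv_mul]; ring

end evalGp

private lemma sing_aux {k : Type*} [Field k] (A1 A2 A3 A4 B1 B2 B3 B4 b : k)
    (h4 : (4:k) ≠ 0)
    (h12 : A1 ≠ A2) (h13 : A1 ≠ A3) (h14 : A1 ≠ A4)
    (g1 : A1 ≠ B1) (g2 : A1 ≠ B2) (g3 : A1 ≠ B3) (g4 : A1 ≠ B4)
    (e1 : A1+A2+A3+A4 = B1+B2+B3+B4)
    (e2 : A1*A2+A1*A3+A1*A4+A2*A3+A2*A4+A3*A4 = B1*B2+B1*B3+B1*B4+B2*B3+B2*B4+B3*B4)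
    (hfy : b^2 = (A1 - B1)*(A1 - B2)*(A1 - B3)*(A1 - B4))
    (hfx : -2*(((A1 - A2)*(A1 - A3)*(A1 - A4) + (A1 - A1)*(A1 - A3)*(A1 - A4) + (A1 - A1)*(A1 - A2)*(A1 - A4) + (A1 - A1)*(A1 - A2)*(A1 - A3)) + ((A1 - B2)*(A1 - B3)*(A1 - B4) + (A1 - B1)*(A1 - B3)*(A1 - B4) + (A1 - B1)*(A1 - B2)*(A1 - B4) + (A1 - B1)*(A1 - B2)*(A1 - B3)))*b^2 - 2*((A1*A2*A3 + A1*A2*A4 + A1*A3*A4 + A2*A3*A4) - (B1*B2*B3 + B1*B2*B4 + B1*B3*B4 + B2*B3*B4))*((A1*A2*A3*A4 - B1*B2*B3*B4) - ((A1*A2*A3 + A1*A2*A4 + A1*A3*A4 + A2*A3*A4) - (B1*B2*B3 + B1*B2*B4 + B1*B3*B4 + B2*B3*B4))*A1) = 0) : False := by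
  have hi : (A1*A2*A3*A4 - B1*B2*B3*B4) - ((A1*A2*A3 + A1*A2*A4 + A1*A3*A4 + A2*A3*A4) - (B1*B2*B3 + B1*B2*B4 + B1*B3*B4 + B2*B3*B4))*A1 = -((A1 - B1)*(A1 - B2)*(A1 - B3)*(A1 - B4)) := by
    linear_combination A1^3 * e1 - A1^2 * e2
  have hii : ((A1*A2*A3 + A1*A2*A4 + A1*A3*A4 + A2*A3*A4) - (B1*B2*B3 + B1*B2*B4 + B1*B3*B4 + B2*B3*B4)) = ((A1 - B2)*(A1 - B3)*(A1 - B4) + (A1 - B1)*(A1 - B3)*(A1 - B4) + (A1 - B1)*(A1 - B2)*(A1 - B4) + (A1 - B1)*(A1 - B2)*(A1 - B3)) - ((A1-A2)*(A1-A3)*(A1-A4)) := by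
    linear_combination (-3*A1^2) * e1 + (2*A1) * e2
  have key : (4:k) * (((A1-A2)*(A1-A3)*(A1-A4)) * ((A1 - B1)*(A1 - B2)*(A1 - B3)*(A1 - B4))) = 0 := by
    linear_combination (-1)*hfx - (2*(((A1 - A2)*(A1 - A3)*(A1 - A4) + (A1 - A1)*(A1 - A3)*(A1 - A4) + (A1 - A1)*(A1 - A2)*(A1 - A4) + (A1 - A1)*(A1 - A2)*(A1 - A3)) + ((A1 - B2)*(A1 - B3)*(A1 - B4) + (A1 - B1)*(A1 - B3)*(A1 - B4) + (A1 - B1)*(A1 - B2)*(A1 - B4) + (A1 - B1)*(A1 - B2)*(A1 - B3))))*hfy - (2*((A1*A2*A3 + A1*A2*A4 + A1*A3*A4 + A2*A3*A4) - (B1*B2*B3 + B1*B2*B4 + B1*B3*B4 + B2*B3*B4)))*hi + (2*((A1 - B1)*(A1 - B2)*(A1 - B3)*(A1 - B4)))*hii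
  have hD1 : ((A1-A2)*(A1-A3)*(A1-A4)) ≠ 0 :=
    mul_ne_zero (mul_ne_zero (sub_ne_zero.mpr h12) (sub_ne_zero.mpr h13)) (sub_ne_zero.mpr h14)
  have hP2 : ((A1 - B1)*(A1 - B2)*(A1 - B3)*(A1 - B4)) ≠ 0 :=
    mul_ne_zero (mul_ne_zero (mul_ne_zero (sub_ne_zero.mpr g1) (sub_ne_zero.mpr g2))
      (sub_ne_zero.mpr g3)) (sub_ne_zero.mpr g4)
  exact (mul_ne_zero h4 (mul_ne_zero hD1 hP2)) key

set_option maxHeartbeats 4000000 in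
/-- Case (II-3): if σ1 = τ1, σ2 = τ2 and σ3 ≠ τ3, then F = 0 has a unique
singular point of the form (x:0:1), namely (ξ:0:1) with ξ = (σ4-τ4)/(σ3-τ3),
and Sing = {(ξ:0:1), (0:1:0), (1:0:0)} has exactly 3 elements. -/
theorem stmt_17
    {k : Type*} [Field k] [IsAlgClosed k]
    (p : ℕ) [CharP k p] (hp : p = 0 ∨ 5 ≤ p)
    (α1 α2 α3 α4 β1 β2 β3 β4 : k)
    (hdist : ([α1, α2, α3, α4, β1, β2, β3, β4] : List k).Pairwise (· ≠ ·))
    (σ1 σ2 σ3 σ4 τ1 τ2 τ3 τ4 : k)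
    (hσ1 : σ1 = α1 + α2 + α3 + α4)
    (hσ2 : σ2 = α1 * α2 + α1 * α3 + α1 * α4 + α2 * α3 + α2 * α4 + α3 * α4)
    (hσ3 : σ3 = α1 * α2 * α3 + α1 * α2 * α4 + α1 * α3 * α4 + α2 * α3 * α4)
    (hσ4 : σ4 = α1 * α2 * α3 * α4)
    (hτ1 : τ1 = β1 + β2 + β3 + β4)
    (hτ2 : τ2 = β1 * β2 + β1 * β3 + β1 * β4 + β2 * β3 + β2 * β4 + β3 * β4)
    (hτ3 : τ3 = β1 * β2 * β3 + β1 * β2 * β4 + β1 * β3 * β4 + β2 * β3 * β4)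
    (hτ4 : τ4 = β1 * β2 * β3 * β4)
    (φ1 φ2 f : MvPolynomial (Fin 2) k)
    (hφ1 : φ1 = (X 0 - C α1) * (X 0 - C α2) * (X 0 - C α3) * (X 0 - C α4))
    (hφ2 : φ2 = (X 0 - C β1) * (X 0 - C β2) * (X 0 - C β3) * (X 0 - C β4))
    (hf : f = X 1 ^ 4 - C 2 * (φ1 + φ2) * X 1 ^ 2 + (φ1 - φ2) ^ 2)
    (F : MvPolynomial (Fin 3) k)
    (hFhom : F.IsHomogeneous 6)
    (hFf : aeval ![(X 0 : MvPolynomial (Fin 2) k), X 1, 1] F = f)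
    (Sing : Set (Projectivization k (Fin 3 → k)))
    (hSing : ∀ P : Projectivization k (Fin 3 → k),
      P ∈ Sing ↔ (eval P.rep F = 0 ∧
        eval P.rep (pderiv 0 F) = 0 ∧
        eval P.rep (pderiv 1 F) = 0 ∧
        eval P.rep (pderiv 2 F) = 0))
    (hστ1 : σ1 = τ1) (hστ2 : σ2 = τ2) (hστ3 : σ3 ≠ τ3) :
    (∀ ξ : k, Projectivization.mk k (![ξ, 0, 1] : Fin 3 → k)
        (by intro hc; simpa using congrFun hc 2) ∈ Sing
      ↔ ξ = (σ4 - τ4) / (σ3 - τ3))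
    ∧ Sing = {Projectivization.mk k
                (![(σ4 - τ4) / (σ3 - τ3), 0, 1] : Fin 3 → k)
                (by intro hc; simpa using congrFun hc 2),
              Projectivization.mk k (![0, 1, 0] : Fin 3 → k)
                (by intro hc; simpa using congrFun hc 1),
              Projectivization.mk k (![1, 0, 0] : Fin 3 → k)
                (by intro hc; simpa using congrFun hc 0)}
    ∧ Sing.ncard = 3 := by
  simp only [List.pairwise_cons, List.mem_cons, List.not_mem_nil, or_false,
    List.mem_singleton, forall_eq_or_imp, forall_eq, List.Pairwise.nil, and_true] at hdist
  obtain ⟨⟨a12, a13, a14, c11, c12, c13, c14⟩, ⟨a23, a24, c21, c22, c23, c24⟩, ⟨a34, c31, c32, c33, c34⟩, ⟨c41, c42, c43, c44⟩, ⟨b12, b13, b14⟩, ⟨b23, b24⟩, ⟨b34⟩⟩ := hdist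
  have h4 : (4:k) ≠ 0 := by
    have h : ((4:ℕ):k) ≠ 0 := by
      rw [Ne, CharP.cast_eq_zero_iff k p]
      rcases hp with rfl | h5
      · decide
      · intro hdvd; have := Nat.le_of_dvd (by norm_num) hdvd; omega
    simpa using h
  subst hσ1 hσ2 hσ3 hσ4 hτ1 hτ2 hτ3 hτ4 hφ1 hφ2 hf
  have hc : (α1*α2*α3 + α1*α2*α4 + α1*α3*α4 + α2*α3*α4) - (β1*β2*β3 + β1*β2*β4 + β1*β3*β4 + β2*β3*β4) ≠ 0 := sub_ne_zero.mpr hστ3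
  have hGhom := Gp_hom α1 α2 α3 α4 β1 β2 β3 β4 (α1*α2*α3 + α1*α2*α4 + α1*α3*α4 + α2*α3*α4 - (β1*β2*β3 + β1*β2*β4 + β1*β3*β4 + β2*β3*β4)) (α1*α2*α3*α4 - β1*β2*β3*β4)
  -- dehomogenized comparison
  have hcomp : ∀ w : Fin 2 → k,
      eval w (X 1 ^ 4 - C 2 * ((X 0 - C α1) * (X 0 - C α2) * (X 0 - C α3) * (X 0 - C α4)
        + (X 0 - C β1) * (X 0 - C β2) * (X 0 - C β3) * (X 0 - C β4)) * X 1 ^ 2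
        + ((X 0 - C α1) * (X 0 - C α2) * (X 0 - C α3) * (X 0 - C α4)
          - (X 0 - C β1) * (X 0 - C β2) * (X 0 - C β3) * (X 0 - C β4)) ^ 2)
      = eval ![w 0, w 1, 1] F := by
    intro w
    rw [← hFf, aeval_def, eval₂_comp_left (eval w)]
    have hcc : (eval w).comp (algebraMap k (MvPolynomial (Fin 2) k)) = RingHom.id k := by
      ext t; simp
    rw [hcc]
    have : (⇑(eval w) ∘ ![(X 0 : MvPolynomial (Fin 2) k), X 1, 1]) = ![w 0, w 1, 1] := by
      funext i; fin_cases i <;> simp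
    rw [this]
    rfl
  have hdeh : ∀ w : Fin 2 → k,
      eval ![w 0, w 1, 1] F = eval ![w 0, w 1, 1] (Gp α1 α2 α3 α4 β1 β2 β3 β4 (α1*α2*α3 + α1*α2*α4 + α1*α3*α4 + α2*α3*α4 - (β1*β2*β3 + β1*β2*β4 + β1*β3*β4 + β2*β3*β4)) (α1*α2*α3*α4 - β1*β2*β3*β4)) := by
    intro w
    rw [← hcomp w, evalGp0]
    have hL : ((w 0 - α1 * 1) * (w 0 - α2 * 1) * (w 0 - α3 * 1) * (w 0 - α4 * 1)) - ((w 0 - β1 * 1) * (w 0 - β2 * 1) * (w 0 - β3 * 1) * (w 0 - β4 * 1))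
        = (α1*α2*α3*α4 - β1*β2*β3*β4) * 1 - (α1*α2*α3 + α1*α2*α4 + α1*α3*α4 + α2*α3*α4 - (β1*β2*β3 + β1*β2*β4 + β1*β3*β4 + β2*β3*β4)) * w 0 := by
      linear_combination (-(w 0)^3) * hστ1 + (w 0)^2 * hστ2
    simp only [map_add, map_sub, map_mul, map_pow, eval_X, eval_C, map_one]
    linear_combination
      ((((w 0) - α1) * ((w 0) - α2) * ((w 0) - α3) * ((w 0) - α4)
        - ((w 0) - β1) * ((w 0) - β2) * ((w 0) - β3) * ((w 0) - β4))
       + ((α1*α2*α3*α4 - β1*β2*β3*β4) * 1 - (α1*α2*α3 + α1*α2*α4 + α1*α3*α4 + α2*α3*α4 - (β1*β2*β3 + β1*β2*β4 + β1*β3*β4 + β2*β3*β4)) * w 0)) * hL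
  have hFG : F = Gp α1 α2 α3 α4 β1 β2 β3 β4 (α1*α2*α3 + α1*α2*α4 + α1*α3*α4 + α2*α3*α4 - (β1*β2*β3 + β1*β2*β4 + β1*β3*β4 + β2*β3*β4)) (α1*α2*α3*α4 - β1*β2*β3*β4) := by
    have hkey : ∀ v : Fin 3 → k, eval v (X 2 * (F - Gp α1 α2 α3 α4 β1 β2 β3 β4 (α1*α2*α3 + α1*α2*α4 + α1*α3*α4 + α2*α3*α4 - (β1*β2*β3 + β1*β2*β4 + β1*β3*β4 + β2*β3*β4)) (α1*α2*α3*α4 - β1*β2*β3*β4))) = 0 := by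
      intro v
      rw [map_mul, map_sub, eval_X]
      rcases eq_or_ne (v 2) 0 with h0 | h0
      · rw [h0, zero_mul]
      · have hsc : v = (v 2) • ![v 0 / v 2, v 1 / v 2, 1] := by
          funext i
          fin_cases i <;> simp [h0] <;> field_simp
        have h1 : eval v F = (v 2)^6 * eval ![v 0 / v 2, v 1 / v 2, 1] F := by
          conv_lhs => rw [hsc]
          rw [eval_smul_homog hFhom]
        have h2 : eval v (Gp α1 α2 α3 α4 β1 β2 β3 β4 (α1*α2*α3 + α1*α2*α4 + α1*α3*α4 + α2*α3*α4 - (β1*β2*β3 + β1*β2*β4 + β1*β3*β4 + β2*β3*β4)) (α1*α2*α3*α4 - β1*β2*β3*β4)) = (v 2)^6 * eval ![v 0 / v 2, v 1 / v 2, 1] (Gp α1 α2 α3 α4 β1 β2 β3 β4 (α1*α2*α3 + α1*α2*α4 + α1*α3*α4 + α2*α3*α4 - (β1*β2*β3 + β1*β2*β4 + β1*β3*β4 + β2*β3*β4)) (α1*α2*α3*α4 - β1*β2*β3*β4)) := by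
          conv_lhs => rw [hsc]
          rw [eval_smul_homog hGhom]
        have h3 := hdeh ![v 0 / v 2, v 1 / v 2]
        simp only [Matrix.cons_val_zero, Matrix.cons_val_one, Matrix.head_cons] at h3
        rw [h1, h2, h3]
        ring
    have hzero : X 2 * (F - Gp α1 α2 α3 α4 β1 β2 β3 β4 (α1*α2*α3 + α1*α2*α4 + α1*α3*α4 + α2*α3*α4 - (β1*β2*β3 + β1*β2*β4 + β1*β3*β4 + β2*β3*β4)) (α1*α2*α3*α4 - β1*β2*β3*β4)) = 0 :=
      MvPolynomial.funext fun v => by rw [hkey v, map_zero]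
    rcases mul_eq_zero.mp hzero with h | h
    · exact absurd h (X_ne_zero _)
    · exact sub_eq_zero.mp h
  -- membership criterion at a chosen representative
  have memSing : ∀ (w : Fin 3 → k) (hw : w ≠ 0),
      (Projectivization.mk k w hw ∈ Sing ↔
        (eval w (Gp α1 α2 α3 α4 β1 β2 β3 β4 (α1*α2*α3 + α1*α2*α4 + α1*α3*α4 + α2*α3*α4 - (β1*β2*β3 + β1*β2*β4 + β1*β3*β4 + β2*β3*β4)) (α1*α2*α3*α4 - β1*β2*β3*β4)) = 0 ∧ eval w (pderiv 0 (Gp α1 α2 α3 α4 β1 β2 β3 β4 (α1*α2*α3 + α1*α2*α4 + α1*α3*α4 + α2*α3*α4 - (β1*β2*β3 + β1*β2*β4 + β1*β3*β4 + β2*β3*β4)) (α1*α2*α3*α4 - β1*β2*β3*β4))) = 0 ∧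
         eval w (pderiv 1 (Gp α1 α2 α3 α4 β1 β2 β3 β4 (α1*α2*α3 + α1*α2*α4 + α1*α3*α4 + α2*α3*α4 - (β1*β2*β3 + β1*β2*β4 + β1*β3*β4 + β2*β3*β4)) (α1*α2*α3*α4 - β1*β2*β3*β4))) = 0 ∧ eval w (pderiv 2 (Gp α1 α2 α3 α4 β1 β2 β3 β4 (α1*α2*α3 + α1*α2*α4 + α1*α3*α4 + α2*α3*α4 - (β1*β2*β3 + β1*β2*β4 + β1*β3*β4 + β2*β3*β4)) (α1*α2*α3*α4 - β1*β2*β3*β4))) = 0)) := by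
    intro w hw
    rw [hSing, hFG]
    obtain ⟨u, hu⟩ := (Projectivization.mk_eq_mk_iff k _ _
      (Projectivization.rep_nonzero _) hw).mp
      (Projectivization.mk_rep (Projectivization.mk k w hw))
    have hrep : (Projectivization.mk k w hw).rep = (u : k) • w := by
      rw [← hu, Units.smul_def]
    rw [hrep, eval_smul_homog hGhom, eval_smul_homog (pderiv_homog hGhom 0),
      eval_smul_homog (pderiv_homog hGhom 1), eval_smul_homog (pderiv_homog hGhom 2)]
    have hu6 : ((u:k))^6 ≠ 0 := pow_ne_zero _ u.ne_zero
    have hu5 : ((u:k))^(6-1) ≠ 0 := pow_ne_zero _ u.ne_zero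
    simp [mul_eq_zero, hu6, hu5]
  have huniq : ∀ ξ : k, Projectivization.mk k (![ξ, 0, 1] : Fin 3 → k)
      (by intro hc; simpa using congrFun hc 2) ∈ Sing
      ↔ ξ = (α1*α2*α3*α4 - β1*β2*β3*β4) / (α1*α2*α3 + α1*α2*α4 + α1*α3*α4 + α2*α3*α4 - (β1*β2*β3 + β1*β2*β4 + β1*β3*β4 + β2*β3*β4)) := by
    intro ξ
    rw [memSing]
    rw [evalGp0, evalGp1, evalGp2, evalGp3]
    constructor
    · rintro ⟨h1, -, -, -⟩
      have hsq : ((α1*α2*α3*α4 - β1*β2*β3*β4) * 1 - (α1*α2*α3 + α1*α2*α4 + α1*α3*α4 + α2*α3*α4 - (β1*β2*β3 + β1*β2*β4 + β1*β3*β4 + β2*β3*β4)) * ξ)^2 = 0 := by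
        linear_combination h1
      have h2 := pow_eq_zero_iff (two_ne_zero) |>.mp hsq
      rw [eq_div_iff hc]
      linear_combination -h2
    · rintro rfl
      have hq : (α1*α2*α3*α4 - β1*β2*β3*β4) * 1
          - (α1*α2*α3 + α1*α2*α4 + α1*α3*α4 + α2*α3*α4 - (β1*β2*β3 + β1*β2*β4 + β1*β3*β4 + β2*β3*β4)) * ((α1*α2*α3*α4 - β1*β2*β3*β4) / (α1*α2*α3 + α1*α2*α4 + α1*α3*α4 + α2*α3*α4 - (β1*β2*β3 + β1*β2*β4 + β1*β3*β4 + β2*β3*β4))) = 0 := by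
        rw [mul_div_cancel₀ _ hc, mul_one, sub_self]
      refine ⟨?_, ?_, ?_, ?_⟩
      · linear_combination ((α1*α2*α3*α4 - β1*β2*β3*β4) * 1
          - (α1*α2*α3 + α1*α2*α4 + α1*α3*α4 + α2*α3*α4 - (β1*β2*β3 + β1*β2*β4 + β1*β3*β4 + β2*β3*β4)) * ((α1*α2*α3*α4 - β1*β2*β3*β4) / (α1*α2*α3 + α1*α2*α4 + α1*α3*α4 + α2*α3*α4 - (β1*β2*β3 + β1*β2*β4 + β1*β3*β4 + β2*β3*β4)))) * hq
      · linear_combination (-2 * (α1*α2*α3 + α1*α2*α4 + α1*α3*α4 + α2*α3*α4 - (β1*β2*β3 + β1*β2*β4 + β1*β3*β4 + β2*β3*β4))) * hq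
      · ring
      · linear_combination (2 * (α1*α2*α3*α4 - β1*β2*β3*β4)
          + 4 * ((α1*α2*α3*α4 - β1*β2*β3*β4) * 1
          - (α1*α2*α3 + α1*α2*α4 + α1*α3*α4 + α2*α3*α4 - (β1*β2*β3 + β1*β2*β4 + β1*β3*β4 + β2*β3*β4)) * ((α1*α2*α3*α4 - β1*β2*β3*β4) / (α1*α2*α3 + α1*α2*α4 + α1*α3*α4 + α2*α3*α4 - (β1*β2*β3 + β1*β2*β4 + β1*β3*β4 + β2*β3*β4))))) * hq
  have hmem1 : Projectivization.mk k (![((α1*α2*α3*α4 - β1*β2*β3*β4) / (α1*α2*α3 + α1*α2*α4 + α1*α3*α4 + α2*α3*α4 - (β1*β2*β3 + β1*β2*β4 + β1*β3*β4 + β2*β3*β4))), 0, 1] : Fin 3 → k)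
      (by intro hc; simpa using congrFun hc 2) ∈ Sing := (huniq _).mpr rfl
  have hmem2 : Projectivization.mk k (![0, 1, 0] : Fin 3 → k)
      (by intro hc; simpa using congrFun hc 1) ∈ Sing := by
    rw [memSing]
    rw [evalGp0, evalGp1, evalGp2, evalGp3]
    refine ⟨?_, ?_, ?_, ?_⟩ <;> ring
  have hmem3 : Projectivization.mk k (![1, 0, 0] : Fin 3 → k)
      (by intro hc; simpa using congrFun hc 0) ∈ Sing := by
    rw [memSing]
    rw [evalGp0, evalGp1, evalGp2, evalGp3]
    refine ⟨?_, ?_, ?_, ?_⟩ <;> ring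
  have hcontra : ∀ a b : k, b ≠ 0 →
      eval ![a, b, 1] (Gp α1 α2 α3 α4 β1 β2 β3 β4 (α1*α2*α3 + α1*α2*α4 + α1*α3*α4 + α2*α3*α4 - (β1*β2*β3 + β1*β2*β4 + β1*β3*β4 + β2*β3*β4)) (α1*α2*α3*α4 - β1*β2*β3*β4)) = 0 →
      eval ![a, b, 1] (pderiv 0 (Gp α1 α2 α3 α4 β1 β2 β3 β4 (α1*α2*α3 + α1*α2*α4 + α1*α3*α4 + α2*α3*α4 - (β1*β2*β3 + β1*β2*β4 + β1*β3*β4 + β2*β3*β4)) (α1*α2*α3*α4 - β1*β2*β3*β4))) = 0 →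
      eval ![a, b, 1] (pderiv 1 (Gp α1 α2 α3 α4 β1 β2 β3 β4 (α1*α2*α3 + α1*α2*α4 + α1*α3*α4 + α2*α3*α4 - (β1*β2*β3 + β1*β2*β4 + β1*β3*β4 + β2*β3*β4)) (α1*α2*α3*α4 - β1*β2*β3*β4))) = 0 → False := by
    intro a b hb W0 W1 W2
    rw [evalGp0] at W0
    rw [evalGp1] at W1
    rw [evalGp2] at W2
    have hb2 : b^2 = ((a - α1 * 1) * (a - α2 * 1) * (a - α3 * 1) * (a - α4 * 1)) + ((a - β1 * 1) * (a - β2 * 1) * (a - β3 * 1) * (a - β4 * 1)) := by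
      have h' : (4:k) * (b * (b^2 - (((a - α1 * 1) * (a - α2 * 1) * (a - α3 * 1) * (a - α4 * 1)) + ((a - β1 * 1) * (a - β2 * 1) * (a - β3 * 1) * (a - β4 * 1))))) = 0 := by
        linear_combination W2
      rcases mul_eq_zero.mp h' with h | h
      · exact absurd h h4
      rcases mul_eq_zero.mp h with h | h
      · exact absurd h hb
      · linear_combination h
    have hL : ((a - α1 * 1) * (a - α2 * 1) * (a - α3 * 1) * (a - α4 * 1)) - ((a - β1 * 1) * (a - β2 * 1) * (a - β3 * 1) * (a - β4 * 1)) = (α1*α2*α3*α4 - β1*β2*β3*β4) * 1 - (α1*α2*α3 + α1*α2*α4 + α1*α3*α4 + α2*α3*α4 - (β1*β2*β3 + β1*β2*β4 + β1*β3*β4 + β2*β3*β4)) * a := by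
      linear_combination (-(a^3)) * hστ1 + (a^2) * hστ2
    have hpp : ((a - α1 * 1) * (a - α2 * 1) * (a - α3 * 1) * (a - α4 * 1)) * ((a - β1 * 1) * (a - β2 * 1) * (a - β3 * 1) * (a - β4 * 1)) = 0 := by
      have h'' : (4:k) * (((a - α1 * 1) * (a - α2 * 1) * (a - α3 * 1) * (a - α4 * 1)) * ((a - β1 * 1) * (a - β2 * 1) * (a - β3 * 1) * (a - β4 * 1))) = 0 := by
        linear_combination (-1) * W0 + (b^2 - (((a - α1 * 1) * (a - α2 * 1) * (a - α3 * 1) * (a - α4 * 1)) + ((a - β1 * 1) * (a - β2 * 1) * (a - β3 * 1) * (a - β4 * 1)))) * hb2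
          - ((((a - α1 * 1) * (a - α2 * 1) * (a - α3 * 1) * (a - α4 * 1)) - ((a - β1 * 1) * (a - β2 * 1) * (a - β3 * 1) * (a - β4 * 1))) + ((α1*α2*α3*α4 - β1*β2*β3*β4) * 1 - (α1*α2*α3 + α1*α2*α4 + α1*α3*α4 + α2*α3*α4 - (β1*β2*β3 + β1*β2*β4 + β1*β3*β4 + β2*β3*β4)) * a)) * hL
      rcases mul_eq_zero.mp h'' with h | h
      · exact absurd h h4
      · exact h
    rcases mul_eq_zero.mp hpp with hPA | hPB
    · rcases mul_eq_zero.mp hPA with hq3 | hx4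
      · rcases mul_eq_zero.mp hq3 with hq2 | hx3
        · rcases mul_eq_zero.mp hq2 with hx1 | hx2
          · have ha : a = α1 := by linear_combination hx1
            rw [ha] at hb2 W1
            refine sing_aux α1 α2 α3 α4 β1 β2 β3 β4 b h4 a12 a13 a14 c11 c12 c13 c14 ?_ ?_ ?_ ?_ <;> [linear_combination hστ1; linear_combination hστ2; linear_combination hb2; linear_combination W1]
          · have ha : a = α2 := by linear_combination hx2
            rw [ha] at hb2 W1
            refine sing_aux α2 α1 α3 α4 β1 β2 β3 β4 b h4 (Ne.symm a12) a23 a24 c21 c22 c23 c24 ?_ ?_ ?_ ?_ <;> [linear_combination hστ1; linear_combination hστ2; linear_combination hb2; linear_combination W1]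
        · have ha : a = α3 := by linear_combination hx3
          rw [ha] at hb2 W1
          refine sing_aux α3 α1 α2 α4 β1 β2 β3 β4 b h4 (Ne.symm a13) (Ne.symm a23) a34 c31 c32 c33 c34 ?_ ?_ ?_ ?_ <;> [linear_combination hστ1; linear_combination hστ2; linear_combination hb2; linear_combination W1]
      · have ha : a = α4 := by linear_combination hx4
        rw [ha] at hb2 W1
        refine sing_aux α4 α1 α2 α3 β1 β2 β3 β4 b h4 (Ne.symm a14) (Ne.symm a24) (Ne.symm a34) c41 c42 c43 c44 ?_ ?_ ?_ ?_ <;> [linear_combination hστ1; linear_combination hστ2; linear_combination hb2; linear_combination W1]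
    · rcases mul_eq_zero.mp hPB with hq3 | hx4
      · rcases mul_eq_zero.mp hq3 with hq2 | hx3
        · rcases mul_eq_zero.mp hq2 with hx1 | hx2
          · have ha : a = β1 := by linear_combination hx1
            rw [ha] at hb2 W1
            refine sing_aux β1 β2 β3 β4 α1 α2 α3 α4 b h4 b12 b13 b14 (Ne.symm c11) (Ne.symm c21) (Ne.symm c31) (Ne.symm c41) ?_ ?_ ?_ ?_ <;> [linear_combination hστ1.symm; linear_combination hστ2.symm; linear_combination hb2; linear_combination W1]
          · have ha : a = β2 := by linear_combination hx2
            rw [ha] at hb2 W1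
            refine sing_aux β2 β1 β3 β4 α1 α2 α3 α4 b h4 (Ne.symm b12) b23 b24 (Ne.symm c12) (Ne.symm c22) (Ne.symm c32) (Ne.symm c42) ?_ ?_ ?_ ?_ <;> [linear_combination hστ1.symm; linear_combination hστ2.symm; linear_combination hb2; linear_combination W1]
        · have ha : a = β3 := by linear_combination hx3
          rw [ha] at hb2 W1
          refine sing_aux β3 β1 β2 β4 α1 α2 α3 α4 b h4 (Ne.symm b13) (Ne.symm b23) b34 (Ne.symm c13) (Ne.symm c23) (Ne.symm c33) (Ne.symm c43) ?_ ?_ ?_ ?_ <;> [linear_combination hστ1.symm; linear_combination hστ2.symm; linear_combination hb2; linear_combination W1]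
      · have ha : a = β4 := by linear_combination hx4
        rw [ha] at hb2 W1
        refine sing_aux β4 β1 β2 β3 α1 α2 α3 α4 b h4 (Ne.symm b14) (Ne.symm b24) (Ne.symm b34) (Ne.symm c14) (Ne.symm c24) (Ne.symm c34) (Ne.symm c44) ?_ ?_ ?_ ?_ <;> [linear_combination hστ1.symm; linear_combination hστ2.symm; linear_combination hb2; linear_combination W1]
  have hset : Sing = {Projectivization.mk k (![((α1*α2*α3*α4 - β1*β2*β3*β4) / (α1*α2*α3 + α1*α2*α4 + α1*α3*α4 + α2*α3*α4 - (β1*β2*β3 + β1*β2*β4 + β1*β3*β4 + β2*β3*β4))), 0, 1] : Fin 3 → k)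
        (by intro hc; simpa using congrFun hc 2),
      Projectivization.mk k (![0, 1, 0] : Fin 3 → k)
        (by intro hc; simpa using congrFun hc 1),
      Projectivization.mk k (![1, 0, 0] : Fin 3 → k)
        (by intro hc; simpa using congrFun hc 0)} := by
    ext P
    simp only [Set.mem_insert_iff, Set.mem_singleton_iff]
    constructor
    · intro hP
      have hrepv : P.rep = ![P.rep 0, P.rep 1, P.rep 2] := by
        funext i; fin_cases i <;> rfl
      have hrepnz : (![P.rep 0, P.rep 1, P.rep 2] : Fin 3 → k) ≠ 0 := by
        rw [← hrepv]; exact Projectivization.rep_nonzero P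
      have hPmk : Projectivization.mk k (![P.rep 0, P.rep 1, P.rep 2] : Fin 3 → k) hrepnz = P := by
        conv_rhs => rw [← Projectivization.mk_rep P]
        rw [Projectivization.mk_eq_mk_iff]
        refine ⟨1, ?_⟩
        rw [one_smul]; exact hrepv
      have hPc := (memSing _ hrepnz).mp ((congrArg (· ∈ Sing) hPmk).mpr hP)
      obtain ⟨E0, E1, E2, E3⟩ := hPc
      rw [evalGp0] at E0
      rw [evalGp2] at E2
      rcases eq_or_ne (P.rep 2) 0 with hz | hz
      · rw [hz] at E0
        have h40 : (4:k) * ((P.rep 0)^4 * (P.rep 1)^2) = 0 := by linear_combination (-1) * E0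
        rcases mul_eq_zero.mp h40 with h | h
        · exact absurd h h4
        rcases mul_eq_zero.mp h with h | h
        · -- P.rep 0 = 0, second point
          have hx : P.rep 0 = 0 := by
            have := pow_eq_zero_iff (n := 4) four_ne_zero |>.mp h
            exact this
          have hy : P.rep 1 ≠ 0 := by
            intro hy0
            apply hrepnz
            funext i; fin_cases i <;> simp [hx, hy0, hz]
          right; left
          rw [← hPmk, Projectivization.mk_eq_mk_iff]
          refine ⟨Units.mk0 (P.rep 1) hy, ?_⟩
          funext i; fin_cases i <;> simp [Units.smul_def, hx, hz]
        · -- P.rep 1 = 0, third point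
          have hy : P.rep 1 = 0 := pow_eq_zero_iff (n := 2) two_ne_zero |>.mp h
          have hx : P.rep 0 ≠ 0 := by
            intro hx0
            apply hrepnz
            funext i; fin_cases i <;> simp [hx0, hy, hz]
          right; right
          rw [← hPmk, Projectivization.mk_eq_mk_iff]
          refine ⟨Units.mk0 (P.rep 0) hx, ?_⟩
          funext i; fin_cases i <;> simp [Units.smul_def, hy, hz]
      · -- z ≠ 0
        have hwnz : (![P.rep 0 / P.rep 2, P.rep 1 / P.rep 2, 1] : Fin 3 → k) ≠ 0 := by
          intro hcon; simpa using congrFun hcon 2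
        have hPw : Projectivization.mk k
            (![P.rep 0 / P.rep 2, P.rep 1 / P.rep 2, 1] : Fin 3 → k) hwnz = P := by
          conv_rhs => rw [← Projectivization.mk_rep P]
          rw [Projectivization.mk_eq_mk_iff]
          refine ⟨Units.mk0 (P.rep 2)⁻¹ (inv_ne_zero hz), ?_⟩
          funext i
          fin_cases i <;>
            simp [Units.smul_def, inv_mul_eq_div, inv_mul_cancel₀ hz]
        obtain ⟨W0, W1, W2, W3⟩ := (memSing _ hwnz).mp ((congrArg (· ∈ Sing) hPw).mpr hP)
        rcases eq_or_ne (P.rep 1 / P.rep 2) 0 with hb | hb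
        · rw [evalGp0, hb] at W0
          have hsq : ((α1*α2*α3*α4 - β1*β2*β3*β4) * 1 - (α1*α2*α3 + α1*α2*α4 + α1*α3*α4 + α2*α3*α4 - (β1*β2*β3 + β1*β2*β4 + β1*β3*β4 + β2*β3*β4)) * (P.rep 0 / P.rep 2))^2 = 0 := by
            linear_combination W0
          have h2 := pow_eq_zero_iff (two_ne_zero) |>.mp hsq
          have ha : P.rep 0 / P.rep 2 = ((α1*α2*α3*α4 - β1*β2*β3*β4) / (α1*α2*α3 + α1*α2*α4 + α1*α3*α4 + α2*α3*α4 - (β1*β2*β3 + β1*β2*β4 + β1*β3*β4 + β2*β3*β4))) := by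
            rw [eq_div_iff hc]
            linear_combination -h2
          left
          rw [← hPw, Projectivization.mk_eq_mk_iff]
          refine ⟨1, ?_⟩
          funext i; fin_cases i <;> simp [ha, hb]
        · exact absurd (hcontra _ _ hb W0 W1 W2) (fun h => h)
    · intro hP
      rcases hP with rfl | rfl | rfl
      · exact hmem1
      · exact hmem2
      · exact hmem3
  have hne12 : Projectivization.mk k (![((α1*α2*α3*α4 - β1*β2*β3*β4) / (α1*α2*α3 + α1*α2*α4 + α1*α3*α4 + α2*α3*α4 - (β1*β2*β3 + β1*β2*β4 + β1*β3*β4 + β2*β3*β4))), 0, 1] : Fin 3 → k)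
      (by intro hc; simpa using congrFun hc 2)
      ≠ Projectivization.mk k (![0, 1, 0] : Fin 3 → k)
      (by intro hc; simpa using congrFun hc 1) := by
    rw [Ne, Projectivization.mk_eq_mk_iff]
    rintro ⟨u, hu⟩
    simpa [Units.smul_def] using congrFun hu 2
  have hne13 : Projectivization.mk k (![((α1*α2*α3*α4 - β1*β2*β3*β4) / (α1*α2*α3 + α1*α2*α4 + α1*α3*α4 + α2*α3*α4 - (β1*β2*β3 + β1*β2*β4 + β1*β3*β4 + β2*β3*β4))), 0, 1] : Fin 3 → k)
      (by intro hc; simpa using congrFun hc 2)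
      ≠ Projectivization.mk k (![1, 0, 0] : Fin 3 → k)
      (by intro hc; simpa using congrFun hc 0) := by
    rw [Ne, Projectivization.mk_eq_mk_iff]
    rintro ⟨u, hu⟩
    simpa [Units.smul_def] using congrFun hu 2
  have hne23 : Projectivization.mk k (![0, 1, 0] : Fin 3 → k)
      (by intro hc; simpa using congrFun hc 1)
      ≠ Projectivization.mk k (![1, 0, 0] : Fin 3 → k)
      (by intro hc; simpa using congrFun hc 0) := by
    rw [Ne, Projectivization.mk_eq_mk_iff]
    rintro ⟨u, hu⟩
    simpa [Units.smul_def] using congrFun hu 1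
  refine ⟨huniq, hset, ?_⟩
  rw [hset]
  rw [Set.ncard_insert_of_notMem (fun h => (Set.mem_insert_iff.mp h).elim hne12 hne13) (Set.toFinite _),
    Set.ncard_pair hne23]
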